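/- For every n ≥ 1 and every family v : Fin n → ℍ of real quaternions such that each v i is purely imaginary (its real part is 0) and the total length satisfies ∑ i, ‖v i‖ = 2, there exists a family q : Fin n → ℍ with ∑ i, ‖q i‖² = 2 and Hopf(q i) = v i for every i, where Hopf(q) = q̄ · 𝐢 · q. In other words, the coordinatewise Hopf map sends the sphere of radius √2 in ℍⁿ onto the space of open n-edge polygons of total length 2 in ℝ³ (identified with purely imaginary quaternions). -/

import Mathlib

open scoped Quaternion

/-- The quaternion unit 𝐢. -/
noncomputable def qI : ℍ[ℝ] := ⟨0, 1, 0, 0⟩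

/-- The Hopf map `q ↦ q̄ · 𝐢 · q`. -/
noncomputable def Hopf (q : ℍ[ℝ]) : ℍ[ℝ] := star q * qI * q

/-- Explicit quaternion constructor with type `ℍ[ℝ]`. -/
def qmk (a b c d : ℝ) : ℍ[ℝ] := ⟨a, b, c, d⟩
@[simp] lemma qmk_re (a b c d : ℝ) : (qmk a b c d).re = a := rfl
@[simp] lemma qmk_imI (a b c d : ℝ) : (qmk a b c d).imI = b := rfl
@[simp] lemma qmk_imJ (a b c d : ℝ) : (qmk a b c d).imJ = c := rfl
@[simp] lemma qmk_imK (a b c d : ℝ) : (qmk a b c d).imK = d := rfl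
lemma qI_eq : qI = qmk 0 1 0 0 := rfl

/-- Every purely imaginary quaternion is in the image of the Hopf map, with a preimage
whose squared norm equals the norm of the target. -/
lemma hopf_exists (v : ℍ[ℝ]) (h : v.re = 0) :
    ∃ q : ℍ[ℝ], ‖q‖ ^ 2 = ‖v‖ ∧ Hopf q = v := by
  set a := v.imI with ha
  set b := v.imJ with hb
  set c := v.imK with hc
  set r := ‖v‖ with hr
  have hr0 : 0 ≤ r := norm_nonneg _
  have hnormsq : ∀ q : ℍ[ℝ], ‖q‖ ^ 2 = Quaternion.normSq q := by
    intro q; rw [Quaternion.normSq_eq_norm_mul_self, sq]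
  have hr2 : r ^ 2 = a ^ 2 + b ^ 2 + c ^ 2 := by
    rw [hr, hnormsq, Quaternion.normSq_def', h]; ring
  by_cases hra : r + a = 0
  · have hb0 : b = 0 := by nlinarith [sq_nonneg b, sq_nonneg c]
    have hc0 : c = 0 := by nlinarith [sq_nonneg b, sq_nonneg c]
    have hs : Real.sqrt r ^ 2 = r := Real.sq_sqrt hr0
    refine ⟨qmk 0 0 (Real.sqrt r) 0, ?_, ?_⟩
    · rw [hnormsq, Quaternion.normSq_def']; simpa using hs
    · ext <;> simp only [Hopf, qI_eq, qmk_re, qmk_imI, qmk_imJ, qmk_imK, Quaternion.re_mul, Quaternion.imI_mul, Quaternion.imJ_mul,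
        Quaternion.imK_mul, Quaternion.re_star, Quaternion.imI_star, Quaternion.imJ_star,
        Quaternion.imK_star, h, ← ha, ← hb, ← hc, hb0, hc0]
      · ring
      · linear_combination -hs - hra
      · ring
      · ring
  · have hra' : 0 < r + a := by
      rcases lt_or_eq_of_le
        (by nlinarith [sq_nonneg b, sq_nonneg c, sq_nonneg (r - a)] : (0:ℝ) ≤ r + a) with h' | h'
      · exact h'
      · exact absurd h'.symm hra
    set x := Real.sqrt ((r + a) / 2) with hx
    have hx2 : x ^ 2 = (r + a) / 2 := Real.sq_sqrt (by linarith)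
    have hx0 : 0 < x := Real.sqrt_pos.mpr (by linarith)
    have hxne : x ≠ 0 := ne_of_gt hx0
    refine ⟨qmk 0 x (b / (2 * x)) (c / (2 * x)), ?_, ?_⟩
    · rw [hnormsq, Quaternion.normSq_def']
      simp only [qmk_re, qmk_imI, qmk_imJ, qmk_imK]
      field_simp
      nlinarith [hx2, hx0]
    · ext <;> simp only [Hopf, qI_eq, qmk_re, qmk_imI, qmk_imJ, qmk_imK, Quaternion.re_mul, Quaternion.imI_mul, Quaternion.imJ_mul,
        Quaternion.imK_mul, Quaternion.re_star, Quaternion.imI_star, Quaternion.imJ_star,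
        Quaternion.imK_star, h, ← ha, ← hb, ← hc]
      · ring
      · field_simp
        linear_combination (4 * x ^ 2 + 2 * r - 2 * a) * hx2 + hr2
      · field_simp
        ring
      · field_simp
        ring

/-- The coordinatewise Hopf map sends the sphere of radius √2 in ℍⁿ onto the space of
open `n`-edge polygons of total length 2 in ℝ³ (purely imaginary quaternions). -/
theorem hopf_surjective_onto_arm_space (n : ℕ) (hn : 1 ≤ n) (v : Fin n → ℍ[ℝ])
    (him : ∀ i, (v i).re = 0) (hlen : ∑ i, ‖v i‖ = 2) :
    ∃ q : Fin n → ℍ[ℝ], (∑ i, ‖q i‖ ^ 2 = 2) ∧ ∀ i, Hopf (q i) = v i := by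
  choose q hq1 hq2 using fun i => hopf_exists (v i) (him i)
  exact ⟨q, by rw [Finset.sum_congr rfl fun i _ => hq1 i]; exact hlen, hq2⟩
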